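/- There do not exist real numbers s, t with 0 < s < 1, 0 < t < 1 and a monic polynomial b(x) with nonnegative real coefficients, b(0) = 1, such that (1 + s x + t x^4 + x^7) · b(x) has all coefficients in {0,1}. -/
import Mathlib
open Polynomial

theorem no_unfair_one_sx_tx4_x7 :
    ¬ ∃ (s t : ℝ) (b : ℝ[X]), 0 < s ∧ s < 1 ∧ 0 < t ∧ t < 1 ∧ b.Monic ∧ b.coeff 0 = 1 ∧
      (∀ n, 0 ≤ b.coeff n) ∧
      (∀ n, ((1 + C s * X + C t * X ^ 4 + X ^ 7) * b).coeff n = 0 ∨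
            ((1 + C s * X + C t * X ^ 4 + X ^ 7) * b).coeff n = 1) := by
  rintro ⟨s, t, b, hs0, hs1, ht0, ht1, -, hb0, hnn, h01⟩
  have hexp : (1 + C s * X + C t * X ^ 4 + X ^ 7) * b
      = b + C s * (b * X^1) + C t * (b * X^4) + b * X^7 := by ring
  -- coefficient formulas
  have c1 : ((1 + C s * X + C t * X ^ 4 + X ^ 7) * b).coeff 1 = b.coeff 1 + s * b.coeff 0 := by
    rw [hexp]; simp [coeff_add, coeff_C_mul, coeff_mul_X_pow']
  have c2 : ((1 + C s * X + C t * X ^ 4 + X ^ 7) * b).coeff 2 = b.coeff 2 + s * b.coeff 1 := by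
    rw [hexp]; simp [coeff_add, coeff_C_mul, coeff_mul_X_pow']
  have c3 : ((1 + C s * X + C t * X ^ 4 + X ^ 7) * b).coeff 3 = b.coeff 3 + s * b.coeff 2 := by
    rw [hexp]; simp [coeff_add, coeff_C_mul, coeff_mul_X_pow']
  have c7 : ((1 + C s * X + C t * X ^ 4 + X ^ 7) * b).coeff 7
      = b.coeff 7 + s * b.coeff 6 + t * b.coeff 3 + b.coeff 0 := by
    rw [hexp]; simp [coeff_add, coeff_C_mul, coeff_mul_X_pow']
  have hb1nn := hnn 1
  have hb2nn := hnn 2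
  have hb3nn := hnn 3
  have hb6nn := hnn 6
  have hb7nn := hnn 7
  -- coeff 1 must be 1
  have h1 : b.coeff 1 + s * b.coeff 0 = 1 := by
    rcases h01 1 with h | h <;> rw [c1] at h
    · nlinarith
    · exact h
  have hb1 : b.coeff 1 = 1 - s := by rw [hb0] at h1; linarith
  -- coeff 2 must be 1
  have h2 : b.coeff 2 + s * b.coeff 1 = 1 := by
    rcases h01 2 with h | h <;> rw [c2] at h
    · nlinarith
    · exact h
  have hb2 : b.coeff 2 = 1 - s * (1 - s) := by rw [hb1] at h2; linarith
  have hb2lt : b.coeff 2 < 1 := by nlinarith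
  -- coeff 3 must be 1, and b.coeff 3 > 0
  have h3 : b.coeff 3 + s * b.coeff 2 = 1 := by
    rcases h01 3 with h | h <;> rw [c3] at h
    · nlinarith
    · exact h
  have hb3 : 0 < b.coeff 3 := by nlinarith
  -- coeff 7 contradiction
  rcases h01 7 with h | h <;> rw [c7, hb0] at h <;> nlinarith
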